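/- Let f : {0,1}^n → {0,1} be a nonzero function that is ε-far in relative distance from every k-junta. Let X ⊆ [n] be such that Pr_{u~f⁻¹(1), w~{0,1}^{X̄}}[f(u) ≠ f(u_X ∘ w)] ≤ ε/20, and let J ⊆ X with |J| ≤ k. Then Pr_{u~f⁻¹(1), w~{0,1}^{X̄}, y~{0,1}^{X∖J}}[f(u_X ∘ w) ≠ f(u_J ∘ y ∘ w)] ≥ ε/5. -/

import Mathlib

open Finset
open scoped symmDiff

def satOf {n : ℕ} (f : (Fin n → Bool) → Bool) : Finset (Fin n → Bool) :=
  Finset.univ.filter (fun x => f x = true)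

noncomputable def relDist {n : ℕ} (f g : (Fin n → Bool) → Bool) : ℝ :=
  ((satOf f ∆ satOf g).card : ℝ) / ((satOf f).card : ℝ)

def IsJuntaOn {n : ℕ} (J : Finset (Fin n)) (f : (Fin n → Bool) → Bool) : Prop :=
  ∀ x y : Fin n → Bool, (∀ i ∈ J, x i = y i) → f x = f y

def IsKJunta {n : ℕ} (k : ℕ) (f : (Fin n → Bool) → Bool) : Prop :=
  ∃ J : Finset (Fin n), J.card ≤ k ∧ IsJuntaOn J f

open Finset

lemma fixCard {n : ℕ} (T : Finset (Fin n)) (c : Fin n → Bool) :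
    (Finset.univ.filter (fun v : Fin n → Bool => ∀ i ∈ T, v i = c i)).card
      = 2 ^ (n - T.card) := by
  have h : (Finset.univ.filter (fun v : Fin n → Bool => ∀ i ∈ T, v i = c i)).card
      = (Finset.univ : Finset ({i // i ∈ Tᶜ} → Bool)).card := by
    refine Finset.card_nbij' (fun v j => v j.1)
      (fun h i => if hi : i ∈ Tᶜ then h ⟨i, hi⟩ else c i) ?_ ?_ ?_ ?_
    · intro a _; exact Finset.mem_univ _
    · intro a _
      simp only [Finset.mem_coe, Finset.mem_filter, Finset.mem_univ, true_and]
      intro i hi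
      rw [dif_neg (by simpa using hi)]
    · intro v hv
      simp only [Finset.mem_coe, Finset.mem_filter, Finset.mem_univ, true_and] at hv
      funext i
      by_cases hi : i ∈ Tᶜ
      · simp [hi]
      · simp only [hi, dite_false]; exact (hv i (by simpa using hi)).symm
    · intro h _
      funext j
      simp [j.2]
  rw [h, Finset.card_univ, Fintype.card_fun, Fintype.card_coe, Finset.card_compl,
    Fintype.card_fin, Fintype.card_bool]

lemma prodFiber {n : ℕ} (X J : Finset (Fin n)) (hJX : J ⊆ X) (u x : Fin n → Bool)
    (hx : ∀ i ∈ J, x i = u i) :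
    (((Finset.univ : Finset (Fin n → Bool)) ×ˢ (Finset.univ : Finset (Fin n → Bool))).filter
        (fun q => (fun i => if i ∈ J then u i else if i ∈ X then q.2 i else q.1 i) = x)).card
      = 2 ^ (n + J.card) := by
  have hset : (((Finset.univ : Finset (Fin n → Bool)) ×ˢ (Finset.univ : Finset (Fin n → Bool))).filter
        (fun q => (fun i => if i ∈ J then u i else if i ∈ X then q.2 i else q.1 i) = x))
      = (Finset.univ.filter (fun v : Fin n → Bool => ∀ i ∈ Xᶜ, v i = x i)) ×ˢ
        (Finset.univ.filter (fun z : Fin n → Bool => ∀ i ∈ X \ J, z i = x i)) := by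
    ext ⟨v, z⟩
    simp only [Finset.mem_filter, Finset.mem_product, Finset.mem_univ, true_and,
      Finset.mem_compl, Finset.mem_sdiff, funext_iff]
    constructor
    · intro h
      refine ⟨fun i hi => ?_, fun i hi => ?_⟩
      · have := h i
        rw [if_neg (fun hJ => hi (hJX hJ)), if_neg hi] at this
        exact this
      · have := h i
        rw [if_neg hi.2, if_pos hi.1] at this
        exact this
    · rintro ⟨hv, hz⟩ i
      by_cases hiJ : i ∈ J
      · rw [if_pos hiJ]; exact (hx i hiJ).symm
      · by_cases hiX : i ∈ X
        · rw [if_neg hiJ, if_pos hiX]; exact hz i ⟨hiX, hiJ⟩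
        · rw [if_neg hiJ, if_neg hiX]; exact hv i hiX
  rw [hset, Finset.card_product, fixCard, fixCard, ← pow_add]
  congr 1
  have h1 : X.card ≤ n := by
    simpa using (Finset.card_le_univ X)
  have h2 : J.card ≤ X.card := Finset.card_le_card hJX
  rw [Finset.card_compl, Fintype.card_fin, Finset.card_sdiff_of_subset hJX]
  omega

def satOf' {n : ℕ} (f : (Fin n → Bool) → Bool) : Finset (Fin n → Bool) :=
  Finset.univ.filter (fun x => f x = true)

def cnt {n : ℕ} (f : (Fin n → Bool) → Bool) (J : Finset (Fin n)) (b : Bool)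
    (a : Fin n → Bool) : ℕ :=
  (Finset.univ.filter (fun x : Fin n → Bool => (∀ i ∈ J, x i = a i) ∧ f x = b)).card

lemma cnt_congr {n : ℕ} (f : (Fin n → Bool) → Bool) (J : Finset (Fin n)) (b : Bool)
    {a a' : Fin n → Bool} (h : ∀ i ∈ J, a i = a' i) : cnt f J b a = cnt f J b a' := by
  unfold cnt
  congr 1
  ext x
  simp only [Finset.mem_filter, Finset.mem_univ, true_and, and_congr_left_iff]
  intro _
  constructor
  · intro hx i hi; rw [hx i hi, h i hi]
  · intro hx i hi; rw [hx i hi, h i hi]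

lemma cnt_add {n : ℕ} (f : (Fin n → Bool) → Bool) (J : Finset (Fin n)) (a : Fin n → Bool) :
    cnt f J false a + cnt f J true a = 2 ^ (n - J.card) := by
  have hu : (Finset.univ.filter (fun x : Fin n → Bool => (∀ i ∈ J, x i = a i) ∧ f x = false))
      ∪ (Finset.univ.filter (fun x : Fin n → Bool => (∀ i ∈ J, x i = a i) ∧ f x = true))
      = Finset.univ.filter (fun x : Fin n → Bool => ∀ i ∈ J, x i = a i) := by
    ext x
    simp only [Finset.mem_union, Finset.mem_filter, Finset.mem_univ, true_and]
    rcases Bool.eq_false_or_eq_true (f x) with h | h <;> simp [h]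
  have hd : Disjoint
      (Finset.univ.filter (fun x : Fin n → Bool => (∀ i ∈ J, x i = a i) ∧ f x = false))
      (Finset.univ.filter (fun x : Fin n → Bool => (∀ i ∈ J, x i = a i) ∧ f x = true)) := by
    rw [Finset.disjoint_filter]
    rintro x _ ⟨_, h0⟩ ⟨_, h1⟩
    simp [h0] at h1
  have := Finset.card_union_of_disjoint hd
  rw [hu, fixCard] at this
  exact this.symm

lemma sum_cnt_swap {n : ℕ} (f : (Fin n → Bool) → Bool) (J : Finset (Fin n)) :
    ∑ u ∈ satOf' f, cnt f J false u
      = ∑ y ∈ Finset.univ.filter (fun y : Fin n → Bool => f y = false), cnt f J true y := by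
  have key : ∀ (b c : Bool),
      ∑ u ∈ Finset.univ.filter (fun x : Fin n → Bool => f x = b),
        cnt f J c u
      = ∑ p ∈ (Finset.univ ×ˢ Finset.univ : Finset ((Fin n → Bool) × (Fin n → Bool))),
          (if f p.1 = b ∧ (∀ i ∈ J, p.2 i = p.1 i) ∧ f p.2 = c then 1 else 0) := by
    intro b c
    rw [Finset.sum_product]
    rw [← Finset.sum_filter_add_sum_filter_not Finset.univ (fun x : Fin n → Bool => f x = b)]
    have h2 : ∑ x ∈ Finset.univ.filter (fun x : Fin n → Bool => ¬ f x = b),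
        ∑ y : Fin n → Bool, (if f x = b ∧ (∀ i ∈ J, y i = x i) ∧ f y = c then 1 else 0) = 0 := by
      apply Finset.sum_eq_zero
      intro x hx
      simp only [Finset.mem_filter] at hx
      apply Finset.sum_eq_zero
      intro y _
      simp [hx.2]
    rw [h2, add_zero]
    apply Finset.sum_congr rfl
    intro x hx
    simp only [Finset.mem_filter] at hx
    unfold cnt
    rw [Finset.card_filter]
    apply Finset.sum_congr rfl
    intro y _
    simp [hx.2]
  rw [show satOf' f = Finset.univ.filter (fun x : Fin n → Bool => f x = true) from rfl]
  rw [key true false, key false true]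
  rw [Finset.sum_product, Finset.sum_comm, Finset.sum_product]
  apply Finset.sum_congr rfl
  intro y _
  apply Finset.sum_congr rfl
  intro x _
  congr 1
  simp only [eq_iff_iff]
  constructor
  · rintro ⟨h1, h2, h3⟩; exact ⟨h3, fun i hi => (h2 i hi).symm, h1⟩
  · rintro ⟨h1, h2, h3⟩; exact ⟨h3, fun i hi => (h2 i hi).symm, h1⟩

open scoped symmDiff in
lemma mainLower {n : ℕ} (f : (Fin n → Bool) → Bool) (J : Finset (Fin n)) :
    2 ^ (n - J.card) *
        ((satOf' f ∆ satOf' (fun x => decide (cnt f J false x ≤ cnt f J true x))).card)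
      ≤ 4 * ∑ u ∈ satOf' f, cnt f J false u := by
  set g : (Fin n → Bool) → Bool := fun x => decide (cnt f J false x ≤ cnt f J true x) with hg
  set S := satOf' f
  set G := satOf' g
  set M := 2 ^ (n - J.card) with hM
  have hcard : (S ∆ G).card = (S \ G).card + (G \ S).card := by
    rw [symmDiff_def]
    exact Finset.card_union_of_disjoint disjoint_sdiff_sdiff
  have h1 : M * (S \ G).card ≤ 2 * ∑ u ∈ S, cnt f J false u := by
    calc M * (S \ G).card = ∑ _x ∈ S \ G, M := by rw [Finset.sum_const, smul_eq_mul, mul_comm]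
    _ ≤ ∑ x ∈ S \ G, 2 * cnt f J false x := by
        apply Finset.sum_le_sum
        intro x hx
        rw [Finset.mem_sdiff] at hx
        have hxS : f x = true := by
          have := hx.1; simpa [S, satOf'] using this
        have hxG : ¬ (cnt f J false x ≤ cnt f J true x) := by
          have := hx.2; simpa [G, satOf', hg] using this
        have := cnt_add f J x
        omega
    _ = 2 * ∑ x ∈ S \ G, cnt f J false x := by rw [Finset.mul_sum]
    _ ≤ 2 * ∑ u ∈ S, cnt f J false u := by
        apply Nat.mul_le_mul_left
        exact Finset.sum_le_sum_of_subset (Finset.sdiff_subset)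
  have h2 : M * (G \ S).card ≤ 2 * ∑ u ∈ S, cnt f J false u := by
    calc M * (G \ S).card = ∑ _x ∈ G \ S, M := by rw [Finset.sum_const, smul_eq_mul, mul_comm]
    _ ≤ ∑ x ∈ G \ S, 2 * cnt f J true x := by
        apply Finset.sum_le_sum
        intro x hx
        rw [Finset.mem_sdiff] at hx
        have hxG : cnt f J false x ≤ cnt f J true x := by
          have := hx.1; simpa [G, satOf', hg] using this
        have := cnt_add f J x
        omega
    _ = 2 * ∑ x ∈ G \ S, cnt f J true x := by rw [Finset.mul_sum]
    _ ≤ 2 * ∑ y ∈ Finset.univ.filter (fun y : Fin n → Bool => f y = false),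
          cnt f J true y := by
        apply Nat.mul_le_mul_left
        apply Finset.sum_le_sum_of_subset
        intro x hx
        rw [Finset.mem_sdiff] at hx
        have : ¬ f x = true := by
          have := hx.2; simpa [S, satOf'] using this
        simp only [Finset.mem_filter, Finset.mem_univ, true_and]
        exact Bool.eq_false_iff.mpr (fun h => this (by simp [h]))
    _ = 2 * ∑ u ∈ S, cnt f J false u := by rw [← sum_cnt_swap]
  calc M * (S ∆ G).card = M * (S \ G).card + M * (G \ S).card := by
        rw [hcard, Nat.mul_add]
  _ ≤ 4 * ∑ u ∈ S, cnt f J false u := by omega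

lemma card_filter_prod {α β : Type*} (s : Finset α) (t : Finset β) (P : α × β → Prop)
    [DecidablePred P] :
    ((s ×ˢ t).filter P).card = ∑ a ∈ s, (t.filter (fun b => P (a, b))).card := by
  rw [Finset.card_filter, Finset.sum_product]
  apply Finset.sum_congr rfl
  intro a _
  rw [Finset.card_filter]

lemma tripleCount {n : ℕ} (f : (Fin n → Bool) → Bool) (X J : Finset (Fin n)) (hJX : J ⊆ X) :
    ((satOf' f ×ˢ ((Finset.univ : Finset (Fin n → Bool)) ×ˢ
        (Finset.univ : Finset (Fin n → Bool)))).filter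
      (fun p => f (fun i => if i ∈ J then p.1 i else
          if i ∈ X then p.2.2 i else p.2.1 i) = false)).card
    = 2 ^ (n + J.card) * ∑ u ∈ satOf' f, cnt f J false u := by
  rw [card_filter_prod]
  rw [Finset.mul_sum]
  apply Finset.sum_congr rfl
  intro u _
  have hmaps : ∀ q ∈ ((Finset.univ : Finset (Fin n → Bool)) ×ˢ
      (Finset.univ : Finset (Fin n → Bool))).filter
        (fun q : (Fin n → Bool) × (Fin n → Bool) =>
          f (fun i => if i ∈ J then u i else if i ∈ X then q.2 i else q.1 i) = false),
      (fun i => if i ∈ J then u i else if i ∈ X then q.2 i else q.1 i) ∈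
        Finset.univ.filter (fun x : Fin n → Bool => (∀ i ∈ J, x i = u i) ∧ f x = false) := by
    intro q hq
    rw [Finset.mem_filter] at hq ⊢
    refine ⟨Finset.mem_univ _, fun i hi => if_pos hi, hq.2⟩
  rw [Finset.card_eq_sum_card_fiberwise hmaps]
  have hfib : ∀ x ∈ Finset.univ.filter
      (fun x : Fin n → Bool => (∀ i ∈ J, x i = u i) ∧ f x = false),
      ((((Finset.univ : Finset (Fin n → Bool)) ×ˢ (Finset.univ : Finset (Fin n → Bool))).filter
        (fun q : (Fin n → Bool) × (Fin n → Bool) =>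
          f (fun i => if i ∈ J then u i else if i ∈ X then q.2 i else q.1 i) = false)).filter
        (fun q => (fun i => if i ∈ J then u i else if i ∈ X then q.2 i else q.1 i) = x)).card
      = 2 ^ (n + J.card) := by
    intro x hx
    rw [Finset.mem_filter] at hx
    rw [Finset.filter_filter]
    have heq : (((Finset.univ : Finset (Fin n → Bool)) ×ˢ
        (Finset.univ : Finset (Fin n → Bool))).filter
        (fun q : (Fin n → Bool) × (Fin n → Bool) =>
          f (fun i => if i ∈ J then u i else if i ∈ X then q.2 i else q.1 i) = false ∧
          (fun i => if i ∈ J then u i else if i ∈ X then q.2 i else q.1 i) = x))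
        = (((Finset.univ : Finset (Fin n → Bool)) ×ˢ
        (Finset.univ : Finset (Fin n → Bool))).filter
        (fun q : (Fin n → Bool) × (Fin n → Bool) =>
          (fun i => if i ∈ J then u i else if i ∈ X then q.2 i else q.1 i) = x)) := by
      apply Finset.filter_congr
      intro q _
      simp only [and_iff_right_iff_imp]
      intro h
      rw [h]
      exact hx.2.2
    rw [heq]
    exact prodFiber X J hJX u x hx.2.1
  rw [Finset.sum_congr rfl hfib, Finset.sum_const, smul_eq_mul]
  rw [mul_comm]
  congr 1

lemma bCount {n : ℕ} (f : (Fin n → Bool) → Bool) (X : Finset (Fin n)) :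
    ((satOf' f ×ˢ ((Finset.univ : Finset (Fin n → Bool)) ×ˢ
        (Finset.univ : Finset (Fin n → Bool)))).filter
      (fun p => f p.1 ≠ f (fun i => if i ∈ X then p.1 i else p.2.1 i))).card
    = ((satOf' f ×ˢ (Finset.univ : Finset (Fin n → Bool))).filter
        (fun p => f p.1 ≠ f (fun i => if i ∈ X then p.1 i else p.2 i))).card * 2 ^ n := by
  rw [card_filter_prod, card_filter_prod, Finset.sum_mul]
  apply Finset.sum_congr rfl
  intro u _
  have heq : (((Finset.univ : Finset (Fin n → Bool)) ×ˢ
      (Finset.univ : Finset (Fin n → Bool))).filter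
      (fun q : (Fin n → Bool) × (Fin n → Bool) =>
        f u ≠ f (fun i => if i ∈ X then u i else q.1 i)))
      = (Finset.univ.filter (fun v : Fin n → Bool =>
          f u ≠ f (fun i => if i ∈ X then u i else v i))) ×ˢ
        (Finset.univ : Finset (Fin n → Bool)) := by
    ext ⟨v, z⟩
    simp [Finset.mem_filter, Finset.mem_product]
  rw [heq, Finset.card_product]
  congr 1
  rw [Finset.card_univ, Fintype.card_fun, Fintype.card_bool, Fintype.card_fin]

/-- Key lemma for the junta tester: if f is ε-far in relative distance from every k-junta,
X satisfies the ε/20 consistency condition, and J ⊆ X with |J| ≤ k, then resampling the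
coordinates of X ∖ J changes the value of f with probability at least ε/5.  Probabilities
are expressed via counting; the roles of w ∈ {0,1}^{X̄} and y ∈ {0,1}^{X∖J} are played by
full uniform strings v and z, reading only the relevant coordinates. -/
theorem stmt8 {n : ℕ} (k : ℕ) (ε : ℝ) (f : (Fin n → Bool) → Bool)
    (hne : (satOf f).Nonempty)
    (hfar : ∀ g : (Fin n → Bool) → Bool, IsKJunta k g → ε ≤ relDist f g)
    (X J : Finset (Fin n)) (hJX : J ⊆ X) (hJ : J.card ≤ k)
    (hX : (((satOf f ×ˢ (Finset.univ : Finset (Fin n → Bool))).filter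
            (fun p => f p.1 ≠ f (fun i => if i ∈ X then p.1 i else p.2 i))).card : ℝ)
          ≤ (ε / 20) * (((satOf f).card : ℝ) * 2 ^ n)) :
    (ε / 5) * (((satOf f).card : ℝ) * 2 ^ n * 2 ^ n)
      ≤ (((satOf f ×ˢ ((Finset.univ : Finset (Fin n → Bool)) ×ˢ
              (Finset.univ : Finset (Fin n → Bool)))).filter
            (fun p => f (fun i => if i ∈ X then p.1 i else p.2.1 i)
                ≠ f (fun i => if i ∈ J then p.1 i else
                      if i ∈ X then p.2.2 i else p.2.1 i))).card : ℝ) := by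
  classical
  have hSS : satOf f = satOf' f := rfl
  -- the junta g
  have hjunta : IsKJunta k (fun x => decide (cnt f J false x ≤ cnt f J true x)) := by
    refine ⟨J, hJ, fun x y hxy => ?_⟩
    simp only
    rw [cnt_congr f J false hxy, cnt_congr f J true hxy]
  have hfg := hfar _ hjunta
  have hs0 : (0:ℝ) < ((satOf f).card : ℝ) := by
    exact_mod_cast Finset.card_pos.mpr hne
  have hD : ε * ((satOf f).card : ℝ)
      ≤ (((satOf f ∆ satOf (fun x => decide (cnt f J false x ≤ cnt f J true x))).card : ℕ) : ℝ) := by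
    rw [relDist] at hfg
    calc ε * ((satOf f).card : ℝ)
        ≤ (((satOf f ∆ satOf (fun x => decide (cnt f J false x ≤ cnt f J true x))).card : ℝ)
            / ((satOf f).card : ℝ)) * ((satOf f).card : ℝ) :=
          mul_le_mul_of_nonneg_right hfg hs0.le
      _ = _ := div_mul_cancel₀ _ (ne_of_gt hs0)
  have hmain := mainLower f J
  have hJn : J.card ≤ n := by
    have h1 : X.card ≤ n := by simpa using (Finset.card_le_univ X)
    exact le_trans (Finset.card_le_card hJX) h1
  have hpow : 2 ^ (n + J.card) * 2 ^ (n - J.card) = 2 ^ n * 2 ^ n := by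
    rw [← pow_add, ← pow_add]
    congr 1
    omega
  have htriple := tripleCount f X J hJX
  -- subset / triangle inequality
  set A := ((satOf f ×ˢ ((Finset.univ : Finset (Fin n → Bool)) ×ˢ
              (Finset.univ : Finset (Fin n → Bool)))).filter
            (fun p => f (fun i => if i ∈ X then p.1 i else p.2.1 i)
                ≠ f (fun i => if i ∈ J then p.1 i else
                      if i ∈ X then p.2.2 i else p.2.1 i))) with hA
  set B3 := ((satOf f ×ˢ ((Finset.univ : Finset (Fin n → Bool)) ×ˢ
              (Finset.univ : Finset (Fin n → Bool)))).filter
            (fun p => f p.1 ≠ f (fun i => if i ∈ X then p.1 i else p.2.1 i))) with hB3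
  set C := ((satOf f ×ˢ ((Finset.univ : Finset (Fin n → Bool)) ×ˢ
              (Finset.univ : Finset (Fin n → Bool)))).filter
            (fun p => f (fun i => if i ∈ J then p.1 i else
                      if i ∈ X then p.2.2 i else p.2.1 i) = false)) with hC
  have hCsub : C ⊆ A ∪ B3 := by
    intro p hp
    rw [hC, Finset.mem_filter] at hp
    obtain ⟨hmem, hc⟩ := hp
    have hp1 : f p.1 = true := by
      have := (Finset.mem_product.mp hmem).1
      simpa [satOf] using this
    rw [Finset.mem_union, hA, hB3, Finset.mem_filter, Finset.mem_filter]
    by_cases hcx : f (fun i => if i ∈ X then p.1 i else p.2.1 i) = true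
    · left
      exact ⟨hmem, by rw [hcx, hc]; simp⟩
    · right
      refine ⟨hmem, ?_⟩
      rw [hp1]
      exact fun h => hcx h.symm
  have hCcard : C.card ≤ A.card + B3.card :=
    le_trans (Finset.card_le_card hCsub) (Finset.card_union_le _ _)
  have hB3card : B3.card = ((satOf f ×ˢ (Finset.univ : Finset (Fin n → Bool))).filter
        (fun p => f p.1 ≠ f (fun i => if i ∈ X then p.1 i else p.2 i))).card * 2 ^ n := by
    rw [hB3, hSS]
    exact bCount f X
  have hCcount : C.card = 2 ^ (n + J.card) * ∑ u ∈ satOf' f, cnt f J false u := by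
    rw [hC, hSS]
    exact htriple
  -- pass to the reals
  set s : ℝ := ((satOf f).card : ℝ)
  set P : ℝ := (2:ℝ) ^ n with hP
  have hMrKr : ((2:ℝ) ^ (n + J.card)) * ((2:ℝ) ^ (n - J.card)) = P * P := by
    rw [hP]
    exact_mod_cast congrArg (fun m : ℕ => (m : ℝ)) hpow
  have hmainR : ((2:ℝ) ^ (n - J.card)) *
      (((satOf f ∆ satOf (fun x => decide (cnt f J false x ≤ cnt f J true x))).card : ℕ) : ℝ)
      ≤ 4 * ((∑ u ∈ satOf' f, cnt f J false u : ℕ) : ℝ) := by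
    have : ((2 ^ (n - J.card) *
        ((satOf' f ∆ satOf' (fun x => decide (cnt f J false x ≤ cnt f J true x))).card) : ℕ) : ℝ)
        ≤ ((4 * ∑ u ∈ satOf' f, cnt f J false u : ℕ) : ℝ) := by exact_mod_cast hmain
    push_cast at this ⊢
    convert this using 3 <;> rfl
  have hCR : (C.card : ℝ) = ((2:ℝ) ^ (n + J.card)) * ((∑ u ∈ satOf' f, cnt f J false u : ℕ) : ℝ) := by
    rw [hCcount]; push_cast; ring
  have hKpos : (0:ℝ) ≤ (2:ℝ) ^ (n + J.card) := by positivity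
  have hMpos : (0:ℝ) ≤ (2:ℝ) ^ (n - J.card) := by positivity
  have hPpos : (0:ℝ) ≤ P := by positivity
  -- chain
  have step1 : ((2:ℝ) ^ (n + J.card)) * (((2:ℝ) ^ (n - J.card)) * (ε * s))
      ≤ ((2:ℝ) ^ (n + J.card)) * (4 * ((∑ u ∈ satOf' f, cnt f J false u : ℕ) : ℝ)) := by
    apply mul_le_mul_of_nonneg_left _ hKpos
    calc ((2:ℝ) ^ (n - J.card)) * (ε * s)
        ≤ ((2:ℝ) ^ (n - J.card)) *
          (((satOf f ∆ satOf (fun x => decide (cnt f J false x ≤ cnt f J true x))).card : ℕ) : ℝ) :=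
          mul_le_mul_of_nonneg_left hD hMpos
      _ ≤ 4 * ((∑ u ∈ satOf' f, cnt f J false u : ℕ) : ℝ) := hmainR
  have step2 : P * P * (ε * s) ≤ 4 * (C.card : ℝ) := by
    calc P * P * (ε * s) = ((2:ℝ) ^ (n + J.card)) * (((2:ℝ) ^ (n - J.card)) * (ε * s)) := by
          rw [← hMrKr]; ring
      _ ≤ ((2:ℝ) ^ (n + J.card)) * (4 * ((∑ u ∈ satOf' f, cnt f J false u : ℕ) : ℝ)) := step1
      _ = 4 * (C.card : ℝ) := by rw [hCR]; ring
  have hCleR : (C.card : ℝ) ≤ (A.card : ℝ) + (B3.card : ℝ) := by exact_mod_cast hCcard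
  have hB3R : (B3.card : ℝ) ≤ (ε / 20) * (s * P) * P := by
    rw [hB3card]
    push_cast
    calc (((satOf f ×ˢ (Finset.univ : Finset (Fin n → Bool))).filter
        (fun p => f p.1 ≠ f (fun i => if i ∈ X then p.1 i else p.2 i))).card : ℝ) * 2 ^ n
        ≤ ((ε / 20) * (s * 2 ^ n)) * 2 ^ n := mul_le_mul_of_nonneg_right hX (by positivity)
      _ = (ε / 20) * (s * P) * P := by rw [hP]
  -- finish
  have goal' : (ε / 5) * (s * P * P) ≤ (A.card : ℝ) := by nlinarith [step2, hCleR, hB3R]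
  calc (ε / 5) * (s * 2 ^ n * 2 ^ n) = (ε / 5) * (s * P * P) := by rw [hP]
    _ ≤ (A.card : ℝ) := goal'
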